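/- Let K be a number field with ring of integers O_K, and let A₁₁ ∈ GL_{m₁}(O_K) and A₂₂ ∈ GL_{m₂}(O_K) have characteristic polynomials with no common root in an algebraic closure of K. For A₁₂, A'₁₂ ∈ M_{m₁×m₂}(O_K), the block upper triangular matrices [[A₁₁, A₁₂],[0, A₂₂]] and [[A₁₁, A'₁₂],[0, A₂₂]] are conjugate in GL_{m₁+m₂}(O_K) if and only if there exist B₁₁ ∈ GL_{m₁}(O_K) commuting with A₁₁ and B₂₂ ∈ GL_{m₂}(O_K) commuting with A₂₂ such that A'₁₂ − B₁₁·A₁₂·B₂₂⁻¹ lies in the image of the map P_{A₁₁,A₂₂} : X ↦ X·A₂₂ − A₁₁·X on M_{m₁×m₂}(O_K). -/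

import Mathlib

open scoped NumberField

/-- The Sylvester-type linear map `X ↦ X·B − A·X` on the space of `m₁ × m₂` matrices. -/
def sylvLMap (R : Type*) [CommRing R] (m₁ m₂ : ℕ)
    (A : Matrix (Fin m₁) (Fin m₁) R) (B : Matrix (Fin m₂) (Fin m₂) R) :
    Matrix (Fin m₁) (Fin m₂) R →ₗ[R] Matrix (Fin m₁) (Fin m₂) R where
  toFun X := X * B - A * X
  map_add' X Y := by
    simp only [Matrix.add_mul, Matrix.mul_add]
    abel
  map_smul' c X := by
    simp only [Matrix.smul_mul, Matrix.mul_smul, smul_sub, RingHom.id_apply]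

open Polynomial

lemma sylv_semiconj_pow {R : Type*} [CommRing R] {n m : ℕ}
    (A : Matrix (Fin n) (Fin n) R) (B : Matrix (Fin m) (Fin m) R)
    (M : Matrix (Fin m) (Fin n) R) (h : M * A = B * M) :
    ∀ k : ℕ, M * A ^ k = B ^ k * M := by
  intro k
  induction k with
  | zero => simp
  | succ k ih =>
      rw [pow_succ, pow_succ, ← Matrix.mul_assoc, ih, Matrix.mul_assoc, h, ← Matrix.mul_assoc]

lemma sylv_semiconj_aeval {R : Type*} [CommRing R] {n m : ℕ}
    (A : Matrix (Fin n) (Fin n) R) (B : Matrix (Fin m) (Fin m) R)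
    (M : Matrix (Fin m) (Fin n) R) (h : M * A = B * M) (p : R[X]) :
    M * (aeval A p) = (aeval B p) * M := by
  induction p using Polynomial.induction_on' with
  | add p q hp hq => simp only [map_add, Matrix.mul_add, Matrix.add_mul, hp, hq]
  | monomial k c =>
      simp only [aeval_monomial, Algebra.algebraMap_eq_smul_one, Matrix.smul_mul, one_mul,
        Matrix.mul_smul, sylv_semiconj_pow A B M h k]

lemma sylv_isCoprime_of_no_common_root {L : Type*} [Field L] [IsAlgClosed L]
    {p q : L[X]} (h : ∀ x, ¬(p.IsRoot x ∧ q.IsRoot x)) : IsCoprime p q := by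
  classical
  rw [← EuclideanDomain.gcd_isUnit_iff]
  by_contra hu
  have hdeg : (EuclideanDomain.gcd p q).degree ≠ 0 := fun hd =>
    hu (Polynomial.isUnit_iff_degree_eq_zero.mpr hd)
  obtain ⟨x, hx⟩ := IsAlgClosed.exists_root _ hdeg
  exact h x ⟨hx.dvd (EuclideanDomain.gcd_dvd_left p q),
    hx.dvd (EuclideanDomain.gcd_dvd_right p q)⟩

lemma sylv_isUnit_aeval {L : Type*} [Field L] {m : ℕ} {p q : L[X]} (h : IsCoprime p q)
    (B : Matrix (Fin m) (Fin m) L) (hq : aeval B q = 0) :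
    IsUnit (aeval B p) := by
  obtain ⟨u, v, huv⟩ := h
  have h1 : aeval B (u * p + v * q) = 1 := by rw [huv]; simp
  rw [map_add, map_mul, map_mul, hq, mul_zero, add_zero] at h1
  have h2 : aeval B p * aeval B u = 1 := by
    rw [← map_mul, mul_comm p u, map_mul]; exact h1
  exact ⟨⟨aeval B p, aeval B u, h2, h1⟩, rfl⟩

lemma sylv_eq_zero_of_semiconj {L : Type*} [Field L] [IsAlgClosed L] {n m : ℕ}
    (A : Matrix (Fin n) (Fin n) L) (B : Matrix (Fin m) (Fin m) L)
    (M : Matrix (Fin m) (Fin n) L)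
    (hroot : ∀ x, ¬(A.charpoly.IsRoot x ∧ B.charpoly.IsRoot x))
    (h : M * A = B * M) : M = 0 := by
  have hcop := sylv_isCoprime_of_no_common_root hroot
  have hu := sylv_isUnit_aeval hcop B (Matrix.aeval_self_charpoly B)
  have h2 := sylv_semiconj_aeval A B M h A.charpoly
  rw [Matrix.aeval_self_charpoly, Matrix.mul_zero] at h2
  obtain ⟨uu, huu⟩ := hu
  calc M = (((uu⁻¹ : (Matrix (Fin m) (Fin m) L)ˣ) : Matrix (Fin m) (Fin m) L) * ((uu : (Matrix (Fin m) (Fin m) L)ˣ) : Matrix (Fin m) (Fin m) L)) * M := by rw [Units.inv_mul, Matrix.one_mul]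
    _ = ((uu⁻¹ : (Matrix (Fin m) (Fin m) L)ˣ) : Matrix (Fin m) (Fin m) L) * ((aeval B A.charpoly) * M) := by rw [huu, Matrix.mul_assoc]
    _ = 0 := by rw [← h2, Matrix.mul_zero]

/-- Vanishing of intertwiners, transported along an injective ring hom into an
algebraically closed field. -/
lemma sylv_vanish {R L : Type*} [CommRing R] [Field L] [IsAlgClosed L]
    (φ : R →+* L) (hinj : Function.Injective φ) {n m : ℕ}
    (a₁ : Matrix (Fin n) (Fin n) R) (a₂ : Matrix (Fin m) (Fin m) R)
    (hroot : ∀ x : L, ¬((a₁.charpoly.map φ).IsRoot x ∧ (a₂.charpoly.map φ).IsRoot x))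
    (M : Matrix (Fin m) (Fin n) R) (hM : M * a₁ = a₂ * M) : M = 0 := by
  have hroot' : ∀ x : L, ¬((a₁.map φ).charpoly.IsRoot x ∧ (a₂.map φ).charpoly.IsRoot x) := by
    intro x hx
    exact hroot x ⟨by rw [← Matrix.charpoly_map]; exact hx.1,
      by rw [← Matrix.charpoly_map]; exact hx.2⟩
  have hmap : M.map φ * a₁.map φ = a₂.map φ * M.map φ := by
    rw [← Matrix.map_mul, ← Matrix.map_mul, hM]
  have hz := sylv_eq_zero_of_semiconj (a₁.map φ) (a₂.map φ) (M.map φ) hroot' hmap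
  ext i j
  apply hinj
  have := congrFun (congrFun hz i) j
  simpa using this

/-- Forward direction, over a general commutative ring, assuming the vanishing property. -/
lemma sylv_forward {R : Type*} [CommRing R] {m₁ m₂ : ℕ}
    (a₁ : Matrix (Fin m₁) (Fin m₁) R) (a₂ : Matrix (Fin m₂) (Fin m₂) R)
    (A₁₂ A₁₂' : Matrix (Fin m₁) (Fin m₂) R)
    (hvanish : ∀ M : Matrix (Fin m₂) (Fin m₁) R, M * a₁ = a₂ * M → M = 0)
    (P : GL (Fin m₁ ⊕ Fin m₂) R)
    (hP : (P : Matrix (Fin m₁ ⊕ Fin m₂) (Fin m₁ ⊕ Fin m₂) R) * Matrix.fromBlocks a₁ A₁₂ 0 a₂ *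
        ((P⁻¹ : GL (Fin m₁ ⊕ Fin m₂) R) : Matrix (Fin m₁ ⊕ Fin m₂) (Fin m₁ ⊕ Fin m₂) R) =
      Matrix.fromBlocks a₁ A₁₂' 0 a₂) :
    ∃ (B₁₁ : GL (Fin m₁) R) (B₂₂ : GL (Fin m₂) R),
      (B₁₁ : Matrix (Fin m₁) (Fin m₁) R) * a₁ = a₁ * (B₁₁ : Matrix (Fin m₁) (Fin m₁) R) ∧
      (B₂₂ : Matrix (Fin m₂) (Fin m₂) R) * a₂ = a₂ * (B₂₂ : Matrix (Fin m₂) (Fin m₂) R) ∧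
      A₁₂' - (B₁₁ : Matrix (Fin m₁) (Fin m₁) R) * A₁₂ *
          ((B₂₂⁻¹ : GL (Fin m₂) R) : Matrix (Fin m₂) (Fin m₂) R) ∈
        LinearMap.range (sylvLMap R m₁ m₂ a₁ a₂) := by
  have hPA : (P : Matrix (Fin m₁ ⊕ Fin m₂) (Fin m₁ ⊕ Fin m₂) R) * Matrix.fromBlocks a₁ A₁₂ 0 a₂ =
      Matrix.fromBlocks a₁ A₁₂' 0 a₂ * (P : Matrix (Fin m₁ ⊕ Fin m₂) (Fin m₁ ⊕ Fin m₂) R) := by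
    have h := congrArg
      (fun M => M * (P : Matrix (Fin m₁ ⊕ Fin m₂) (Fin m₁ ⊕ Fin m₂) R)) hP
    simpa only [Matrix.mul_assoc, Units.inv_mul, Matrix.mul_one] using h
  set Pmat := (P : Matrix (Fin m₁ ⊕ Fin m₂) (Fin m₁ ⊕ Fin m₂) R) with hPmatd
  set Q₁₁ := Matrix.toBlocks₁₁ Pmat with hQ11d
  set Q₁₂ := Matrix.toBlocks₁₂ Pmat with hQ12d
  set Q₂₁ := Matrix.toBlocks₂₁ Pmat with hQ21d
  set Q₂₂ := Matrix.toBlocks₂₂ Pmat with hQ22d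
  have hPdec : Pmat = Matrix.fromBlocks Q₁₁ Q₁₂ Q₂₁ Q₂₂ :=
    (Matrix.fromBlocks_toBlocks _).symm
  rw [hPdec, Matrix.fromBlocks_multiply, Matrix.fromBlocks_multiply] at hPA
  have h11 := congrArg Matrix.toBlocks₁₁ hPA
  have h12 := congrArg Matrix.toBlocks₁₂ hPA
  have h21 := congrArg Matrix.toBlocks₂₁ hPA
  have h22 := congrArg Matrix.toBlocks₂₂ hPA
  simp only [Matrix.toBlocks_fromBlocks₁₁, Matrix.toBlocks_fromBlocks₁₂,
    Matrix.toBlocks_fromBlocks₂₁, Matrix.toBlocks_fromBlocks₂₂,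
    Matrix.mul_zero, Matrix.zero_mul, add_zero, zero_add] at h11 h12 h21 h22
  have hQ21zero : Q₂₁ = 0 := hvanish Q₂₁ h21
  rw [hQ21zero] at h11 h22 hPdec
  simp only [Matrix.mul_zero, add_zero] at h11
  simp only [Matrix.zero_mul, zero_add] at h22
  have hdet : IsUnit (Pmat.det) := (Matrix.isUnit_iff_isUnit_det _).mp P.isUnit
  rw [hPdec, Matrix.det_fromBlocks_zero₂₁] at hdet
  have hu1 : IsUnit Q₁₁ := (Matrix.isUnit_iff_isUnit_det _).mpr (isUnit_of_mul_isUnit_left hdet)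
  have hu2 : IsUnit Q₂₂ := (Matrix.isUnit_iff_isUnit_det _).mpr (isUnit_of_mul_isUnit_right hdet)
  refine ⟨hu1.unit, hu2.unit, ?_, ?_, ?_⟩
  · rw [hu1.unit_spec]; exact h11
  · rw [hu2.unit_spec]; exact h22
  · rw [hu1.unit_spec]
    set N : Matrix (Fin m₂) (Fin m₂) R := ((hu2.unit⁻¹ : GL (Fin m₂) R) : Matrix (Fin m₂) (Fin m₂) R) with hN
    have hQN : Q₂₂ * N = 1 := by
      conv_lhs => rw [← hu2.unit_spec]
      exact hu2.unit.mul_inv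
    have hc : Commute ((hu2.unit : GL (Fin m₂) R) : Matrix (Fin m₂) (Fin m₂) R) a₂ := by
      rw [hu2.unit_spec]; exact h22
    have hNa : N * a₂ = a₂ * N := (hc.units_inv_left).eq
    have hQ12a2 : Q₁₂ * a₂ = a₁ * Q₁₂ + A₁₂' * Q₂₂ - Q₁₁ * A₁₂ := by
      rw [eq_sub_iff_add_eq, add_comm]; exact h12
    refine ⟨Q₁₂ * N, ?_⟩
    show Q₁₂ * N * a₂ - a₁ * (Q₁₂ * N) = A₁₂' - Q₁₁ * A₁₂ * N
    have step1 : Q₁₂ * N * a₂ = Q₁₂ * a₂ * N := by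
      rw [Matrix.mul_assoc, hNa, ← Matrix.mul_assoc]
    rw [step1, ← Matrix.mul_assoc, hQ12a2, Matrix.sub_mul, Matrix.add_mul,
      Matrix.mul_assoc A₁₂' Q₂₂ N, hQN, Matrix.mul_one, Matrix.mul_assoc a₁ Q₁₂ N]
    abel

/-- Reverse direction, over a general commutative ring. -/
lemma sylv_reverse {R : Type*} [CommRing R] {m₁ m₂ : ℕ}
    (a₁ : Matrix (Fin m₁) (Fin m₁) R) (a₂ : Matrix (Fin m₂) (Fin m₂) R)
    (A₁₂ A₁₂' : Matrix (Fin m₁) (Fin m₂) R)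
    (B₁₁ : GL (Fin m₁) R) (B₂₂ : GL (Fin m₂) R)
    (h1 : (B₁₁ : Matrix (Fin m₁) (Fin m₁) R) * a₁ = a₁ * (B₁₁ : Matrix (Fin m₁) (Fin m₁) R))
    (h2 : (B₂₂ : Matrix (Fin m₂) (Fin m₂) R) * a₂ = a₂ * (B₂₂ : Matrix (Fin m₂) (Fin m₂) R))
    (hmem : A₁₂' - (B₁₁ : Matrix (Fin m₁) (Fin m₁) R) * A₁₂ *
        ((B₂₂⁻¹ : GL (Fin m₂) R) : Matrix (Fin m₂) (Fin m₂) R) ∈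
      LinearMap.range (sylvLMap R m₁ m₂ a₁ a₂)) :
    ∃ P : GL (Fin m₁ ⊕ Fin m₂) R,
      (P : Matrix (Fin m₁ ⊕ Fin m₂) (Fin m₁ ⊕ Fin m₂) R) * Matrix.fromBlocks a₁ A₁₂ 0 a₂ *
          ((P⁻¹ : GL (Fin m₁ ⊕ Fin m₂) R) : Matrix (Fin m₁ ⊕ Fin m₂) (Fin m₁ ⊕ Fin m₂) R) =
        Matrix.fromBlocks a₁ A₁₂' 0 a₂ := by
  obtain ⟨X, hX⟩ := hmem
  have hX' : X * a₂ - a₁ * X = A₁₂' - (B₁₁ : Matrix (Fin m₁) (Fin m₁) R) * A₁₂ *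
      ((B₂₂⁻¹ : GL (Fin m₂) R) : Matrix (Fin m₂) (Fin m₂) R) := hX
  set b₁ : Matrix (Fin m₁) (Fin m₁) R := ((B₁₁ : GL (Fin m₁) R) : Matrix (Fin m₁) (Fin m₁) R) with hb₁
  set b₂ : Matrix (Fin m₂) (Fin m₂) R := ((B₂₂ : GL (Fin m₂) R) : Matrix (Fin m₂) (Fin m₂) R) with hb₂
  set b₁' : Matrix (Fin m₁) (Fin m₁) R := ((B₁₁⁻¹ : GL (Fin m₁) R) : Matrix (Fin m₁) (Fin m₁) R) with hb₁'
  set b₂' : Matrix (Fin m₂) (Fin m₂) R := ((B₂₂⁻¹ : GL (Fin m₂) R) : Matrix (Fin m₂) (Fin m₂) R) with hb₂'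
  have hb1 : b₁ * b₁' = 1 := B₁₁.mul_inv
  have hb1' : b₁' * b₁ = 1 := B₁₁.inv_mul
  have hb2 : b₂ * b₂' = 1 := B₂₂.mul_inv
  have hb2' : b₂' * b₂ = 1 := B₂₂.inv_mul
  set Y : Matrix (Fin m₁) (Fin m₂) R := X * b₂ with hY
  set Pm := Matrix.fromBlocks b₁ Y 0 b₂ with hPm
  set Pinv := Matrix.fromBlocks b₁' (-(b₁' * Y * b₂')) 0 b₂' with hPinvd
  have hPmInv : Pm * Pinv = 1 := by
    have e11 : b₁ * b₁' + Y * (0 : Matrix (Fin m₂) (Fin m₁) R) = 1 := by rw [hb1, Matrix.mul_zero, add_zero]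
    have e12 : b₁ * -(b₁' * Y * b₂') + Y * b₂' = 0 := by
      rw [Matrix.mul_neg, ← Matrix.mul_assoc, ← Matrix.mul_assoc, hb1, Matrix.one_mul,
        neg_add_cancel]
    have e21 : (0 : Matrix (Fin m₂) (Fin m₁) R) * b₁' + b₂ * (0 : Matrix (Fin m₂) (Fin m₁) R) = 0 := by
      rw [Matrix.zero_mul, Matrix.mul_zero, add_zero]
    have e22 : (0 : Matrix (Fin m₂) (Fin m₁) R) * -(b₁' * Y * b₂') + b₂ * b₂' = 1 := by
      rw [Matrix.zero_mul, hb2, zero_add]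
    rw [hPm, hPinvd, Matrix.fromBlocks_multiply, e11, e12, e21, e22, Matrix.fromBlocks_one]
  have hPInvm : Pinv * Pm = 1 := by
    have e11 : b₁' * b₁ + -(b₁' * Y * b₂') * (0 : Matrix (Fin m₂) (Fin m₁) R) = 1 := by
      rw [hb1', Matrix.mul_zero, add_zero]
    have e12 : b₁' * Y + -(b₁' * Y * b₂') * b₂ = 0 := by
      rw [Matrix.neg_mul, Matrix.mul_assoc (b₁' * Y) b₂' b₂, hb2', Matrix.mul_one,
        add_neg_cancel]
    have e21 : (0 : Matrix (Fin m₂) (Fin m₁) R) * b₁ + b₂' * (0 : Matrix (Fin m₂) (Fin m₁) R) = 0 := by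
      rw [Matrix.zero_mul, Matrix.mul_zero, add_zero]
    have e22 : (0 : Matrix (Fin m₂) (Fin m₁) R) * Y + b₂' * b₂ = 1 := by
      rw [Matrix.zero_mul, hb2', zero_add]
    rw [hPm, hPinvd, Matrix.fromBlocks_multiply, e11, e12, e21, e22, Matrix.fromBlocks_one]
  refine ⟨⟨Pm, Pinv, hPmInv, hPInvm⟩, ?_⟩
  show Pm * Matrix.fromBlocks a₁ A₁₂ 0 a₂ * Pinv = Matrix.fromBlocks a₁ A₁₂' 0 a₂
  have heq : Y * a₂ - a₁ * Y = A₁₂' * b₂ - b₁ * A₁₂ := by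
    have h3 := congrArg (fun M => M * b₂) hX'
    rw [Matrix.sub_mul, Matrix.sub_mul, Matrix.mul_assoc X a₂ b₂, ← h2,
      ← Matrix.mul_assoc X b₂ a₂, Matrix.mul_assoc a₁ X b₂,
      Matrix.mul_assoc (b₁ * A₁₂) b₂' b₂, hb2', Matrix.mul_one] at h3
    exact h3
  have hPA : Pm * Matrix.fromBlocks a₁ A₁₂ 0 a₂ = Matrix.fromBlocks a₁ A₁₂' 0 a₂ * Pm := by
    have g11l : b₁ * a₁ + Y * (0 : Matrix (Fin m₂) (Fin m₁) R) = a₁ * b₁ := by rw [Matrix.mul_zero, add_zero, h1]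
    have g11r : a₁ * b₁ + A₁₂' * (0 : Matrix (Fin m₂) (Fin m₁) R) = a₁ * b₁ := by rw [Matrix.mul_zero, add_zero]
    have g12l : b₁ * A₁₂ + Y * a₂ = a₁ * Y + A₁₂' * b₂ := by
      have h4 := sub_eq_sub_iff_add_eq_add.mp heq
      rw [add_comm (b₁ * A₁₂) (Y * a₂), h4, add_comm]
    have g21l : (0 : Matrix (Fin m₂) (Fin m₁) R) * a₁ + b₂ * (0 : Matrix (Fin m₂) (Fin m₁) R) = 0 := by
      rw [Matrix.zero_mul, Matrix.mul_zero, add_zero]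
    have g21r : (0 : Matrix (Fin m₂) (Fin m₁) R) * b₁ + a₂ * (0 : Matrix (Fin m₂) (Fin m₁) R) = 0 := by
      rw [Matrix.zero_mul, Matrix.mul_zero, add_zero]
    have g22l : (0 : Matrix (Fin m₂) (Fin m₁) R) * A₁₂ + b₂ * a₂ = a₂ * b₂ := by
      rw [Matrix.zero_mul, zero_add, h2]
    have g22r : (0 : Matrix (Fin m₂) (Fin m₁) R) * Y + a₂ * b₂ = a₂ * b₂ := by
      rw [Matrix.zero_mul, zero_add]
    rw [hPm, Matrix.fromBlocks_multiply, Matrix.fromBlocks_multiply, g11l, g11r, g12l,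
      g21l, g21r, g22l, g22r]
  rw [hPA, Matrix.mul_assoc, hPmInv, Matrix.mul_one]

/-- **Conjugacy criterion for block upper-triangular matrices.**
Let `A₁₁ ∈ GL_{m₁}(𝓞 K)` and `A₂₂ ∈ GL_{m₂}(𝓞 K)` have characteristic polynomials with no
common root in an algebraic closure of `K`.  The matrices `[[A₁₁, A₁₂],[0, A₂₂]]` and
`[[A₁₁, A'₁₂],[0, A₂₂]]` are conjugate in `GL_{m₁+m₂}(𝓞 K)` iff there are `B₁₁` commuting
with `A₁₁` and `B₂₂` commuting with `A₂₂` such that `A'₁₂ − B₁₁·A₁₂·B₂₂⁻¹` lies in the image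
of `X ↦ X·A₂₂ − A₁₁·X`. -/
theorem blockTriangular_conjugate_iff
    (K : Type*) [Field K] [NumberField K] (m₁ m₂ : ℕ)
    (A₁₁ : GL (Fin m₁) (𝓞 K)) (A₂₂ : GL (Fin m₂) (𝓞 K))
    (A₁₂ A₁₂' : Matrix (Fin m₁) (Fin m₂) (𝓞 K))
    (hcommon : ∀ x : AlgebraicClosure K,
      ¬((((A₁₁ : Matrix (Fin m₁) (Fin m₁) (𝓞 K)).charpoly.map (algebraMap (𝓞 K) K)).map
            (algebraMap K (AlgebraicClosure K))).IsRoot x ∧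
        (((A₂₂ : Matrix (Fin m₂) (Fin m₂) (𝓞 K)).charpoly.map (algebraMap (𝓞 K) K)).map
            (algebraMap K (AlgebraicClosure K))).IsRoot x)) :
    (∃ P : GL (Fin m₁ ⊕ Fin m₂) (𝓞 K),
      (P : Matrix (Fin m₁ ⊕ Fin m₂) (Fin m₁ ⊕ Fin m₂) (𝓞 K)) *
          Matrix.fromBlocks (A₁₁ : Matrix (Fin m₁) (Fin m₁) (𝓞 K)) A₁₂ 0
            (A₂₂ : Matrix (Fin m₂) (Fin m₂) (𝓞 K)) *
          ((P⁻¹ : GL (Fin m₁ ⊕ Fin m₂) (𝓞 K)) :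
            Matrix (Fin m₁ ⊕ Fin m₂) (Fin m₁ ⊕ Fin m₂) (𝓞 K)) =
        Matrix.fromBlocks (A₁₁ : Matrix (Fin m₁) (Fin m₁) (𝓞 K)) A₁₂' 0
          (A₂₂ : Matrix (Fin m₂) (Fin m₂) (𝓞 K))) ↔
    (∃ (B₁₁ : GL (Fin m₁) (𝓞 K)) (B₂₂ : GL (Fin m₂) (𝓞 K)),
      (B₁₁ : Matrix (Fin m₁) (Fin m₁) (𝓞 K)) * (A₁₁ : Matrix (Fin m₁) (Fin m₁) (𝓞 K)) =
        (A₁₁ : Matrix (Fin m₁) (Fin m₁) (𝓞 K)) * (B₁₁ : Matrix (Fin m₁) (Fin m₁) (𝓞 K)) ∧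
      (B₂₂ : Matrix (Fin m₂) (Fin m₂) (𝓞 K)) * (A₂₂ : Matrix (Fin m₂) (Fin m₂) (𝓞 K)) =
        (A₂₂ : Matrix (Fin m₂) (Fin m₂) (𝓞 K)) * (B₂₂ : Matrix (Fin m₂) (Fin m₂) (𝓞 K)) ∧
      A₁₂' - (B₁₁ : Matrix (Fin m₁) (Fin m₁) (𝓞 K)) * A₁₂ *
          ((B₂₂⁻¹ : GL (Fin m₂) (𝓞 K)) : Matrix (Fin m₂) (Fin m₂) (𝓞 K)) ∈
        LinearMap.range (sylvLMap (𝓞 K) m₁ m₂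
          (A₁₁ : Matrix (Fin m₁) (Fin m₁) (𝓞 K)) (A₂₂ : Matrix (Fin m₂) (Fin m₂) (𝓞 K)))) := by
  constructor
  · rintro ⟨P, hP⟩
    refine sylv_forward _ _ A₁₂ A₁₂' ?_ P hP
    intro M hM
    refine sylv_vanish ((algebraMap K (AlgebraicClosure K)).comp (algebraMap (𝓞 K) K))
      ((algebraMap K (AlgebraicClosure K)).injective.comp
        (IsFractionRing.injective (𝓞 K) K)) _ _ ?_ M hM
    intro x hx
    refine hcommon x ⟨?_, ?_⟩
    · have := hx.1
      rwa [← Polynomial.map_map] at this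
    · have := hx.2
      rwa [← Polynomial.map_map] at this
  · rintro ⟨B₁₁, B₂₂, h1, h2, hmem⟩
    exact sylv_reverse _ _ A₁₂ A₁₂' B₁₁ B₂₂ h1 h2 hmem
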